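/- Let L_X and L_Y be Laplacians of undirected unweighted graphs G_X and G_Y on the same node set V, and assume every nontrivial cut of G_Y is nonempty (e.g., G_Y connected). Then the minimum cut mapping distortion ζ_min = min over proper nonempty subsets S ⊂ V of cut_{G_Y}(S, S̄)/cut_{G_X}(S, S̄) satisfies ζ_min ≥ 1/λ_max(L_Y⁺L_X). -/

import Mathlib

open Matrix

/-- `B` is the Moore–Penrose pseudoinverse of `A`. -/
def IsMoorePenroseInv {N : ℕ} (A B : Matrix (Fin N) (Fin N) ℝ) : Prop :=
  A * B * A = A ∧ B * A * B = B ∧ (A * B)ᵀ = A * B ∧ (B * A)ᵀ = B * A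

/-- The indicator vector of a finset of vertices. -/
def indVec {N : ℕ} (S : Finset (Fin N)) : Fin N → ℝ := fun i => if i ∈ S then 1 else 0

lemma mp_unique {N : ℕ} {A P Q : Matrix (Fin N) (Fin N) ℝ}
    (hP : IsMoorePenroseInv A P) (hQ : IsMoorePenroseInv A Q) : P = Q := by
  obtain ⟨hP1, hP2, hP3, hP4⟩ := hP
  obtain ⟨hQ1, hQ2, hQ3, hQ4⟩ := hQ
  have hAP : A * P = A * Q := by
    calc A * P = (A * P)ᵀ := hP3.symm
      _ = ((A * Q) * (A * P))ᵀ := by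
          rw [show (A * Q) * (A * P) = (A * Q * A) * P by noncomm_ring, hQ1]
      _ = (A * P)ᵀ * (A * Q)ᵀ := transpose_mul _ _
      _ = (A * P) * (A * Q) := by rw [hP3, hQ3]
      _ = (A * P * A) * Q := by noncomm_ring
      _ = A * Q := by rw [hP1]
  have hPA : P * A = Q * A := by
    calc P * A = (P * A)ᵀ := hP4.symm
      _ = ((P * A) * (Q * A))ᵀ := by
          rw [show (P * A) * (Q * A) = P * (A * Q * A) by noncomm_ring, hQ1]
      _ = (Q * A)ᵀ * (P * A)ᵀ := transpose_mul _ _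
      _ = (Q * A) * (P * A) := by rw [hP4, hQ4]
      _ = Q * (A * P * A) := by noncomm_ring
      _ = Q * A := by rw [hP1]
  calc P = P * A * P := hP2.symm
    _ = P * (A * Q) := by rw [Matrix.mul_assoc, hAP]
    _ = (P * A) * Q := by noncomm_ring
    _ = (Q * A) * Q := by rw [hPA]
    _ = Q := hQ2

lemma mp_transpose {N : ℕ} {A P : Matrix (Fin N) (Fin N) ℝ} (hA : Aᵀ = A)
    (hP : IsMoorePenroseInv A P) : IsMoorePenroseInv A Pᵀ := by
  obtain ⟨h1, h2, h3, h4⟩ := hP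
  refine ⟨?_, ?_, ?_, ?_⟩
  · calc A * Pᵀ * A = Aᵀ * Pᵀ * Aᵀ := by rw [hA]
      _ = (A * P * A)ᵀ := by simp [transpose_mul, Matrix.mul_assoc]
      _ = Aᵀ := by rw [h1]
      _ = A := hA
  · calc Pᵀ * A * Pᵀ = Pᵀ * Aᵀ * Pᵀ := by rw [hA]
      _ = (P * A * P)ᵀ := by simp [transpose_mul, Matrix.mul_assoc]
      _ = Pᵀ := by rw [h2]
  · have hPAeq : A * Pᵀ = P * A := by
      calc A * Pᵀ = (P * Aᵀ)ᵀ := by simp [transpose_mul]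
        _ = (P * A)ᵀ := by rw [hA]
        _ = P * A := h4
    rw [hPAeq]
    exact h4
  · have hPAeq : Pᵀ * A = A * P := by
      calc Pᵀ * A = (Aᵀ * P)ᵀ := by simp [transpose_mul]
        _ = (A * P)ᵀ := by rw [hA]
        _ = A * P := h3
    rw [hPAeq]
    exact h3

open scoped MatrixOrder in
lemma exists_psd_sqrt {N : ℕ} {Y : Matrix (Fin N) (Fin N) ℝ} (h : Y.PosSemidef) :
    ∃ S : Matrix (Fin N) (Fin N) ℝ, S.PosSemidef ∧ S * S = Y :=
  ⟨CFC.sqrt Y, (CFC.sqrt_nonneg Y).posSemidef, CFC.sqrt_mul_sqrt_self Y h.nonneg⟩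

lemma dot_symm {N : ℕ} {P : Matrix (Fin N) (Fin N) ℝ} (hP : Pᵀ = P) (x y : Fin N → ℝ) :
    x ⬝ᵥ P *ᵥ y = (P *ᵥ x) ⬝ᵥ y := by
  rw [Matrix.dotProduct_mulVec, ← Matrix.mulVec_transpose, hP]

/-- The minimum cut mapping distortion ζ_min = min_S cut_{G_Y}(S,S̄)/cut_{G_X}(S,S̄)
satisfies ζ_min ≥ 1/λ_max(L_Y⁺L_X), where cut values are computed as `zᵀ L z` for the
0-1 indicator vector `z` of `S` (the quotient taken in `ℝ≥0∞`). -/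
theorem min_cut_mapping_distortion_ge (N : ℕ)
    (GX GY : SimpleGraph (Fin N)) [DecidableRel GX.Adj] [DecidableRel GY.Adj]
    (Yp : Matrix (Fin N) (Fin N) ℝ)
    (hYp : IsMoorePenroseInv (GY.lapMatrix ℝ) Yp)
    (hYcut : ∀ S : Finset (Fin N), S.Nonempty → S ≠ Finset.univ →
      indVec S ⬝ᵥ (GY.lapMatrix ℝ).mulVec (indVec S) ≠ 0)
    (lam : ℝ)
    (hlam : Module.End.HasEigenvalue (Matrix.mulVecLin (Yp * GX.lapMatrix ℝ)) lam)
    (hlam_max : ∀ μ : ℝ,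
      Module.End.HasEigenvalue (Matrix.mulVecLin (Yp * GX.lapMatrix ℝ)) μ → μ ≤ lam) :
    1 / ENNReal.ofReal lam ≤
      ⨅ S : {S : Finset (Fin N) // S.Nonempty ∧ S ≠ Finset.univ},
        ENNReal.ofReal (indVec S.1 ⬝ᵥ (GY.lapMatrix ℝ).mulVec (indVec S.1)) /
          ENNReal.ofReal (indVec S.1 ⬝ᵥ (GX.lapMatrix ℝ).mulVec (indVec S.1)) := by
  classical
  set A := GX.lapMatrix ℝ with hAdef
  set L := GY.lapMatrix ℝ with hLdef
  have hApsd : A.PosSemidef := SimpleGraph.posSemidef_lapMatrix ℝ GX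
  have hLpsd : L.PosSemidef := SimpleGraph.posSemidef_lapMatrix ℝ GY
  have hAt : Aᵀ = A := GX.isSymm_lapMatrix (R := ℝ)
  have hLt : Lᵀ = L := GY.isSymm_lapMatrix (R := ℝ)
  -- Yp is symmetric
  have hYpt : Ypᵀ = Yp := mp_unique (mp_transpose hLt hYp) hYp
  -- Yp is PSD
  have hYpPSD : Yp.PosSemidef := by
    have h := hLpsd.mul_mul_conjTranspose_same Yp
    rwa [Matrix.conjTranspose_eq_transpose_of_trivial, hYpt, hYp.2.1] at h
  obtain ⟨Sq, hSqPSD, hSqSq⟩ := exists_psd_sqrt hYpPSD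
  have hSqt : Sqᵀ = Sq := by
    have h := hSqPSD.1
    rwa [Matrix.IsHermitian, Matrix.conjTranspose_eq_transpose_of_trivial] at h
  set M := Sq * A * Sq with hMdef
  have hMpsd : M.PosSemidef := by
    have h := hApsd.mul_mul_conjTranspose_same Sq
    rwa [Matrix.conjTranspose_eq_transpose_of_trivial, hSqt] at h
  have hM : M.IsHermitian := hMpsd.1
  refine le_iInf ?_
  rintro ⟨S, hSne, hSnu⟩
  dsimp only
  obtain ⟨i₀, hi₀⟩ := hSne
  haveI : Nonempty (Fin N) := ⟨i₀⟩
  set z := indVec S with hzdef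
  -- nonnegativity of quadratic forms
  have hzLz_nonneg : 0 ≤ z ⬝ᵥ L *ᵥ z := by simpa using hLpsd.dotProduct_mulVec_nonneg z
  have hzAz_nonneg : 0 ≤ z ⬝ᵥ A *ᵥ z := by simpa using hApsd.dotProduct_mulVec_nonneg z
  have hzLz_pos : 0 < z ⬝ᵥ L *ᵥ z :=
    lt_of_le_of_ne hzLz_nonneg (Ne.symm (hYcut S ⟨i₀, hi₀⟩ hSnu))
  -- decomposition z = u + v with v in the kernel of L (hence constant)
  set u := (Yp * L) *ᵥ z with hudef
  set v := z - u with hvdef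
  have hzuv : z = u + v := by rw [hvdef]; abel
  have hLv : L *ᵥ v = 0 := by
    rw [hvdef, Matrix.mulVec_sub, hudef, Matrix.mulVec_mulVec,
      show L * (Yp * L) = L * Yp * L by noncomm_ring, hYp.1, sub_self]
  have hadj : ∀ i j, GY.Adj i j → v i = v j := by
    have h0 : Matrix.toLinearMap₂' ℝ L v v = 0 := by
      rw [Matrix.toLinearMap₂'_apply', hLv, dotProduct_zero]
    exact (SimpleGraph.lapMatrix_toLinearMap₂'_apply'_eq_zero_iff_forall_adj ℝ GY v).mp h0
  have hvconst : ∀ i j, v i = v j := by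
    by_contra hcon
    push_neg at hcon
    obtain ⟨i, j, hij⟩ := hcon
    set S' : Finset (Fin N) := Finset.univ.filter (fun k => v k = v i) with hS'def
    have hiS' : i ∈ S' := by simp [hS'def]
    have hjS' : j ∉ S' := by simpa [hS'def] using fun h => hij h.symm
    refine hYcut S' ⟨i, hiS'⟩ (fun h => hjS' (h ▸ Finset.mem_univ j)) ?_
    have h0 : Matrix.toLinearMap₂' ℝ L (indVec S') (indVec S') = 0 := by
      rw [SimpleGraph.lapMatrix_toLinearMap₂'_apply'_eq_zero_iff_forall_adj]
      intro k l hkl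
      have hv : v k = v l := hadj k l hkl
      simp only [indVec, hS'def, Finset.mem_filter, Finset.mem_univ, true_and]
      rw [hv]
    rwa [Matrix.toLinearMap₂'_apply'] at h0
  have hAv : A *ᵥ v = 0 := by
    have hv1 : v = v i₀ • (fun _ => (1 : ℝ)) := funext fun k => by
      simp [hvconst k i₀]
    rw [hv1, Matrix.mulVec_smul, hAdef, SimpleGraph.lapMatrix_mulVec_const_eq_zero, smul_zero]
  -- quadratic form reduction
  have quad_red : ∀ (P : Matrix (Fin N) (Fin N) ℝ), Pᵀ = P → P *ᵥ v = 0 →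
      z ⬝ᵥ P *ᵥ z = u ⬝ᵥ P *ᵥ u := by
    intro P hPt hPv
    rw [hzuv, Matrix.mulVec_add, hPv, add_zero, add_dotProduct,
      dot_symm hPt v u, hPv, zero_dotProduct, add_zero]
  have hzAu : z ⬝ᵥ A *ᵥ z = u ⬝ᵥ A *ᵥ u := quad_red A hAt hAv
  have hzLu : z ⬝ᵥ L *ᵥ z = u ⬝ᵥ L *ᵥ u := quad_red L hLt hLv
  -- express via w
  set w := Sq *ᵥ (L *ᵥ z) with hwdef
  have huSw : u = Sq *ᵥ w := by
    rw [hwdef, hudef, Matrix.mulVec_mulVec, Matrix.mulVec_mulVec, hSqSq]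
  have huAu : u ⬝ᵥ A *ᵥ u = w ⬝ᵥ M *ᵥ w := by
    rw [huSw, ← dot_symm hSqt w (A *ᵥ (Sq *ᵥ w)), Matrix.mulVec_mulVec,
      Matrix.mulVec_mulVec]
  have hLu : L *ᵥ u = L *ᵥ z := by
    rw [hudef, Matrix.mulVec_mulVec, show L * (Yp * L) = L * Yp * L by noncomm_ring, hYp.1]
  have huYp : u = Yp *ᵥ (L *ᵥ z) := by rw [hudef, Matrix.mulVec_mulVec]
  have huLu : u ⬝ᵥ L *ᵥ u = w ⬝ᵥ w := by
    rw [hLu, huYp, ← dot_symm hYpt (L *ᵥ z) (L *ᵥ z), ← hSqSq,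
      ← Matrix.mulVec_mulVec, dot_symm hSqt (L *ᵥ z) (Sq *ᵥ (L *ᵥ z))]
  -- Rayleigh bound for M
  obtain ⟨i₁, hmax⟩ := Finite.exists_max hM.eigenvalues
  set c := hM.eigenvalues i₁ with hcdef
  set U : Matrix (Fin N) (Fin N) ℝ := (hM.eigenvectorUnitary : Matrix (Fin N) (Fin N) ℝ)
    with hUdef
  have hUU : U * Uᵀ = 1 := by
    have h := Matrix.mem_unitaryGroup_iff.mp hM.eigenvectorUnitary.2
    rwa [Matrix.star_eq_conjTranspose, Matrix.conjTranspose_eq_transpose_of_trivial] at h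
  have hofReal : (RCLike.ofReal ∘ hM.eigenvalues : Fin N → ℝ) = hM.eigenvalues := by
    funext i; simp
  have hspec : M = U * Matrix.diagonal hM.eigenvalues * Uᵀ := by
    have h := hM.spectral_theorem
    rwa [Unitary.conjStarAlgAut_apply, Matrix.star_eq_conjTranspose,
      Matrix.conjTranspose_eq_transpose_of_trivial, hofReal] at h
  have hray : ∀ x : Fin N → ℝ, x ⬝ᵥ M *ᵥ x ≤ c * (x ⬝ᵥ x) := by
    intro x
    set y := Uᵀ *ᵥ x with hydef
    have h1 : x ⬝ᵥ M *ᵥ x = y ⬝ᵥ Matrix.diagonal hM.eigenvalues *ᵥ y := by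
      conv_lhs => rw [hspec]
      rw [← Matrix.mulVec_mulVec, ← Matrix.mulVec_mulVec,
        Matrix.dotProduct_mulVec x U _, ← Matrix.mulVec_transpose]
    have h2 : y ⬝ᵥ y = x ⬝ᵥ x := by
      conv_lhs => rw [hydef]
      conv_lhs => lhs; rw [Matrix.mulVec_transpose]
      rw [← Matrix.dotProduct_mulVec, Matrix.mulVec_mulVec, hUU, Matrix.one_mulVec]
    have h3 : y ⬝ᵥ Matrix.diagonal hM.eigenvalues *ᵥ y
        = ∑ i, hM.eigenvalues i * (y i * y i) := by
      simp only [dotProduct, Matrix.mulVec_diagonal]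
      exact Finset.sum_congr rfl fun i _ => by ring
    have h4 : ∑ i, hM.eigenvalues i * (y i * y i) ≤ ∑ i, c * (y i * y i) :=
      Finset.sum_le_sum fun i _ => mul_le_mul_of_nonneg_right (hmax i) (mul_self_nonneg _)
    have h5 : ∑ i, c * (y i * y i) = c * (y ⬝ᵥ y) := by
      rw [← Finset.mul_sum]
      simp [dotProduct]
    rw [h1, h3, ← h2]
    exact le_trans h4 (le_of_eq h5)
  have hkey : z ⬝ᵥ A *ᵥ z ≤ c * (z ⬝ᵥ L *ᵥ z) := by
    rw [hzAu, huAu, hzLu, huLu]; exact hray w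
  by_cases h0 : z ⬝ᵥ A *ᵥ z = 0
  · rw [h0, ENNReal.ofReal_zero, ENNReal.div_zero (ENNReal.ofReal_pos.mpr hzLz_pos).ne']
    exact le_top
  · have hzAz_pos : 0 < z ⬝ᵥ A *ᵥ z := lt_of_le_of_ne hzAz_nonneg (Ne.symm h0)
    have hc_pos : 0 < c := by
      by_contra hc
      push_neg at hc
      have : c * (z ⬝ᵥ L *ᵥ z) ≤ 0 := mul_nonpos_of_nonpos_of_nonneg hc hzLz_nonneg
      linarith
    -- c is an eigenvalue of Yp * A
    have hb := hM.mulVec_eigenvectorBasis i₁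
    set b : Fin N → ℝ := ⇑(hM.eigenvectorBasis i₁) with hbdef
    have hbne : b ≠ 0 := by
      intro hb0
      apply hM.eigenvectorBasis.orthonormal.ne_zero i₁
      ext k
      exact congrFun hb0 k
    set q := Sq *ᵥ b with hqdef
    have hq : (Yp * A) *ᵥ q = c • q := by
      rw [hqdef, Matrix.mulVec_mulVec,
        show Yp * A * Sq = Sq * M by rw [hMdef, ← hSqSq]; noncomm_ring,
        ← Matrix.mulVec_mulVec, hb, Matrix.mulVec_smul]
    have hqne : q ≠ 0 := by
      intro hq0
      have hMb : M *ᵥ b = 0 := by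
        have hM3 : M *ᵥ b = Sq *ᵥ (A *ᵥ (Sq *ᵥ b)) := by
          rw [Matrix.mulVec_mulVec, Matrix.mulVec_mulVec]
        rw [hM3, ← hqdef, hq0, Matrix.mulVec_zero, Matrix.mulVec_zero]
      rw [hMb] at hb
      exact hbne ((smul_eq_zero.mp hb.symm).resolve_left hc_pos.ne')
    have heig : Module.End.HasEigenvalue (Matrix.mulVecLin (Yp * A)) c :=
      Module.End.hasEigenvalue_of_hasEigenvector
        ⟨Module.End.mem_eigenspace_iff.mpr (by simpa [Matrix.mulVecLin_apply] using hq), hqne⟩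
    have hc_le : c ≤ lam := hlam_max c heig
    have hlam_pos : 0 < lam := lt_of_lt_of_le hc_pos hc_le
    have hfinal : z ⬝ᵥ A *ᵥ z ≤ lam * (z ⬝ᵥ L *ᵥ z) :=
      le_trans hkey (mul_le_mul_of_nonneg_right hc_le hzLz_nonneg)
    rw [one_div, ← ENNReal.ofReal_inv_of_pos hlam_pos,
      ← ENNReal.ofReal_div_of_pos hzAz_pos]
    apply ENNReal.ofReal_le_ofReal
    rw [le_div_iff₀ hzAz_pos]
    calc lam⁻¹ * (z ⬝ᵥ A *ᵥ z) ≤ lam⁻¹ * (lam * (z ⬝ᵥ L *ᵥ z)) :=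
        mul_le_mul_of_nonneg_left hfinal (inv_nonneg.mpr hlam_pos.le)
      _ = z ⬝ᵥ L *ᵥ z := by field_simp
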